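/- arXiv:1809.07293 — 7 statements merged into one kernel-verified Lean document; each statement's English description precedes it below -/
import Mathlib

section
/- For integers n > m ≥ 1, the trinomial x^n + a·x^m + b is irreducible as a polynomial in x over the rational function field K(a,b) in two variables over a field K. -/
open Polynomial

set_option synthInstance.maxHeartbeats 1000000 in
/-- For integers `n > m ≥ 1`, the trinomial `x^n + a·x^m + b` is irreducible over the
rational function field `K(a,b)` in two variables over a field `K`. -/
theorem trinomial_irreducible (K : Type) [Field K] (n m : ℕ) (hm : 1 ≤ m) (hmn : m < n) :
    Irreducible
      (X ^ n +
        C (algebraMap (MvPolynomial (Fin 2) K) (FractionRing (MvPolynomial (Fin 2) K))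
            (MvPolynomial.X 0)) * X ^ m +
        C (algebraMap (MvPolynomial (Fin 2) K) (FractionRing (MvPolynomial (Fin 2) K))
            (MvPolynomial.X 1))) := by
  set A := MvPolynomial (Fin 2) K
  set p : Polynomial A := X ^ n + C (MvPolynomial.X 0) * X ^ m + C (MvPolynomial.X 1) with hp
  have hmonic : p.Monic := by
    rw [hp, add_assoc]
    apply monic_X_pow_add
    apply lt_of_le_of_lt (degree_add_le _ _)
    apply max_lt
    · calc degree (C (MvPolynomial.X 0 : A) * X ^ m) ≤ 0 + degree ((X : Polynomial A) ^ m) :=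
            le_trans (degree_mul_le _ _) (add_le_add_left degree_C_le _)
        _ < n := by
            rw [zero_add, degree_X_pow]
            exact_mod_cast hmn
    · exact lt_of_le_of_lt degree_C_le (by exact_mod_cast (by omega : 0 < n))
  -- transfer irreducibility via the isomorphism separating out the variable `b`
  let e1 : Polynomial A ≃+* MvPolynomial (Option (Fin 2)) K :=
    (MvPolynomial.optionEquivLeft K (Fin 2)).symm.toRingEquiv
  let e2 : MvPolynomial (Option (Fin 2)) K ≃+* MvPolynomial (Option (Fin 2)) K :=
    (MvPolynomial.renameEquiv K (Equiv.swap (some 1 : Option (Fin 2)) none)).toRingEquiv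
  let e3 : MvPolynomial (Option (Fin 2)) K ≃+* Polynomial A :=
    (MvPolynomial.optionEquivLeft K (Fin 2)).toRingEquiv
  let φ : Polynomial A ≃+* Polynomial A := (e1.trans e2).trans e3
  have hX : φ X = C (MvPolynomial.X 1) := by
    show e3 (e2 (e1 X)) = _
    have h1 : e1 X = MvPolynomial.X none := by
      show (MvPolynomial.optionEquivLeft K (Fin 2)).symm X = _
      rw [AlgEquiv.symm_apply_eq, MvPolynomial.optionEquivLeft_X_none]
    rw [h1]
    show e3 (MvPolynomial.rename _ (MvPolynomial.X none)) = _
    rw [MvPolynomial.rename_X, Equiv.swap_apply_right]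
    exact MvPolynomial.optionEquivLeft_X_some K (Fin 2) 1
  have hC0 : φ (C (MvPolynomial.X 0)) = C (MvPolynomial.X 0) := by
    show e3 (e2 (e1 (C (MvPolynomial.X 0)))) = _
    have h1 : e1 (C (MvPolynomial.X 0)) = MvPolynomial.X (some 0) := by
      show (MvPolynomial.optionEquivLeft K (Fin 2)).symm (C (MvPolynomial.X 0)) = _
      rw [AlgEquiv.symm_apply_eq, MvPolynomial.optionEquivLeft_X_some]
    rw [h1]
    show e3 (MvPolynomial.rename _ (MvPolynomial.X (some 0))) = _
    rw [MvPolynomial.rename_X, Equiv.swap_apply_of_ne_of_ne (by decide) (by decide)]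
    exact MvPolynomial.optionEquivLeft_X_some K (Fin 2) 0
  have hC1 : φ (C (MvPolynomial.X 1)) = X := by
    show e3 (e2 (e1 (C (MvPolynomial.X 1)))) = _
    have h1 : e1 (C (MvPolynomial.X 1)) = MvPolynomial.X (some 1) := by
      show (MvPolynomial.optionEquivLeft K (Fin 2)).symm (C (MvPolynomial.X 1)) = _
      rw [AlgEquiv.symm_apply_eq, MvPolynomial.optionEquivLeft_X_some]
    rw [h1]
    show e3 (MvPolynomial.rename _ (MvPolynomial.X (some 1))) = _
    rw [MvPolynomial.rename_X, Equiv.swap_apply_left]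
    exact MvPolynomial.optionEquivLeft_X_none K (Fin 2)
  have hφp : φ p = X + C ((MvPolynomial.X 1 : A) ^ n + MvPolynomial.X 0 * MvPolynomial.X 1 ^ m) := by
    rw [hp]
    rw [map_add, map_add, map_mul, map_pow, map_pow, hX, hC0, hC1]
    simp only [← C_pow, ← C_mul, ← C_add]
    ring
  have hφirr : Irreducible (φ p) := by
    rw [hφp]
    exact (monic_X_add_C _).irreducible_of_degree_eq_one (degree_X_add_C _)
  have hpirr : Irreducible p := by
    have := hφirr.map (f := φ.symm.toMulEquiv)
    simpa using this
  have := (hmonic.irreducible_iff_irreducible_map_fraction_map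
    (K := FractionRing A)).mp hpirr
  have hmap : p.map (algebraMap A (FractionRing A)) =
      X ^ n + C (algebraMap A (FractionRing A) (MvPolynomial.X 0)) * X ^ m +
        C (algebraMap A (FractionRing A) (MvPolynomial.X 1)) := by
    simp [hp]
  rwa [hmap] at this
end

section
/- For coprime integers n > m ≥ 1, the trinomial x^n + a·x^m + b is a separable polynomial over the rational function field K(a,b). -/
open Polynomial

set_option maxHeartbeats 1000000 in
lemma trinomial_aux_indep (K : Type) [Field K] {z w : ℤ} {i j : ℕ} (hi : 1 ≤ i)
    (h : (z : FractionRing (MvPolynomial (Fin 2) K)) *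
        (algebraMap (MvPolynomial (Fin 2) K) (FractionRing (MvPolynomial (Fin 2) K))
          (MvPolynomial.X 0)) ^ i
      = (w : FractionRing (MvPolynomial (Fin 2) K)) *
        (algebraMap (MvPolynomial (Fin 2) K) (FractionRing (MvPolynomial (Fin 2) K))
          (MvPolynomial.X 1)) ^ j) :
    (z : K) = 0 := by
  set R := MvPolynomial (Fin 2) K
  set F := FractionRing R
  have hinj : Function.Injective (algebraMap R F) := IsFractionRing.injective R F
  have hR : ((z : R) * (MvPolynomial.X 0) ^ i : R) = (w : R) * (MvPolynomial.X 1) ^ j := by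
    apply hinj
    push_cast
    simpa using h
  have := congrArg (MvPolynomial.coeff (Finsupp.single 0 i)) hR
  have hne : (Finsupp.single (0 : Fin 2) i) ≠ (Finsupp.single (1 : Fin 2) j) := by
    intro hcontra
    have := DFunLike.congr_fun hcontra 0
    simp [Finsupp.single_eq_of_ne (show (1 : Fin 2) ≠ 0 by decide)] at this
    omega
  rw [show ((z : ℤ) : R) = MvPolynomial.C ((z : ℤ) : K) from
        (map_intCast (MvPolynomial.C : K →+* R) z).symm,
      show ((w : ℤ) : R) = MvPolynomial.C ((w : ℤ) : K) from
        (map_intCast (MvPolynomial.C : K →+* R) w).symm,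
      MvPolynomial.coeff_C_mul, MvPolynomial.coeff_C_mul, MvPolynomial.X_pow_eq_monomial,
      MvPolynomial.X_pow_eq_monomial, MvPolynomial.coeff_monomial, MvPolynomial.coeff_monomial,
      if_pos rfl, if_neg (fun hh => hne hh.symm)] at this
  simpa using this

set_option maxHeartbeats 2000000 in
/-- For coprime integers `n > m ≥ 1`, the trinomial `x^n + a·x^m + b` is a separable
polynomial over the rational function field `K(a,b)`. -/
theorem trinomial_separable (K : Type) [Field K] (n m : ℕ) (hm : 1 ≤ m) (hmn : m < n)
    (hcop : Nat.Coprime n m) :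
    Polynomial.Separable
      (X ^ n +
        C (algebraMap (MvPolynomial (Fin 2) K) (FractionRing (MvPolynomial (Fin 2) K))
            (MvPolynomial.X 0)) * X ^ m +
        C (algebraMap (MvPolynomial (Fin 2) K) (FractionRing (MvPolynomial (Fin 2) K))
            (MvPolynomial.X 1))) := by
  classical
  obtain ⟨k, rfl⟩ : ∃ k, n = k + m := ⟨n - m, by omega⟩
  have hk : 1 ≤ k := by omega
  set R := MvPolynomial (Fin 2) K with hR
  set F := FractionRing R with hF
  set a : F := algebraMap R F (MvPolynomial.X 0) with ha
  set b : F := algebraMap R F (MvPolynomial.X 1) with hb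
  set f : F[X] := X ^ (k + m) + C a * X ^ m + C b with hf
  have hinj : Function.Injective (algebraMap R F) := IsFractionRing.injective R F
  have ha0 : a ≠ 0 := by
    rw [ha, ← map_zero (algebraMap R F)]
    exact fun h => MvPolynomial.X_ne_zero 0 (hinj h)
  have hb0 : b ≠ 0 := by
    rw [hb, ← map_zero (algebraMap R F)]
    exact fun h => MvPolynomial.X_ne_zero 1 (hinj h)
  set Ω := AlgebraicClosure F with hΩ
  set i : F →+* Ω := algebraMap F Ω with hi
  rw [Polynomial.Separable, ← Polynomial.isCoprime_map i]
  by_contra hcon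
  set p := f.map i with hp
  set q := (derivative f).map i with hq
  set d := EuclideanDomain.gcd p q with hd
  have hgcd : ¬ IsUnit d := fun h => hcon (EuclideanDomain.gcd_isUnit_iff.1 h)
  have hfmonic : f.Monic := by
    have h1 : (C a * X ^ m).degree < (X ^ (k + m) : F[X]).degree := by
      rw [degree_X_pow]
      exact lt_of_le_of_lt (degree_C_mul_X_pow_le m a) (by exact_mod_cast hmn)
    have h2 : (C b).degree < (X ^ (k + m) : F[X]).degree := by
      rw [degree_X_pow]
      exact lt_of_le_of_lt degree_C_le (by exact_mod_cast lt_of_le_of_lt (Nat.zero_le m) hmn)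
    have := monic_X_pow (R := F) (k + m)
    rw [hf, add_assoc]
    exact this.add_of_left (lt_of_le_of_lt (degree_add_le _ _) (max_lt h1 h2))
  have hp0 : p ≠ 0 := by
    rw [hp]
    exact (hfmonic.map i).ne_zero
  have hd0 : d ≠ 0 := fun h => hp0 (EuclideanDomain.gcd_eq_zero_iff.1 h).1
  have hdeg : d.degree ≠ 0 := fun h => hgcd (isUnit_iff_degree_eq_zero.2 h)
  obtain ⟨θ, hθ⟩ := IsAlgClosed.exists_root d hdeg
  have hroot1 : eval θ p = 0 := hθ.dvd (EuclideanDomain.gcd_dvd_left p q) |>.eq_zero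
  have hroot2 : eval θ q = 0 := hθ.dvd (EuclideanDomain.gcd_dvd_right p q) |>.eq_zero
  set A : Ω := i a with hA
  set B : Ω := i b with hB
  have hA0 : A ≠ 0 := fun h => ha0 (by rwa [hA, _root_.map_eq_zero] at h)
  have hB0 : B ≠ 0 := fun h => hb0 (by rwa [hB, _root_.map_eq_zero] at h)
  have e1 : θ ^ (k + m) + A * θ ^ m + B = 0 := by
    have := hroot1
    simp only [hp, hf, eval_map, eval₂_add, eval₂_mul, eval₂_pow, eval₂_X, eval₂_C] at this
    exact this
  have e2 : ((k + m : ℕ) : Ω) * θ ^ (k + m - 1) + (m : Ω) * A * θ ^ (m - 1) = 0 := by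
    have := hroot2
    rw [hq, hf] at this
    simp only [derivative_add, derivative_C, derivative_C_mul, derivative_X_pow, eval_map,
      eval₂_add, eval₂_mul, eval₂_pow, eval₂_X, eval₂_C, eval₂_natCast, add_zero,
      map_natCast] at this
    push_cast at this ⊢
    linear_combination this
  have hθ0 : θ ≠ 0 := by
    intro h
    rw [h, zero_pow (by omega), zero_pow (by omega), mul_zero, zero_add, zero_add] at e1
    exact hB0 e1
  -- a ring hom from K to Ω to compare characteristics
  set ψ : K →+* Ω := i.comp ((algebraMap R F).comp (MvPolynomial.C)) with hψ
  have hψcast : ∀ c : ℕ, ((c : K) = 0 ↔ (c : Ω) = 0) := by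
    intro c
    constructor
    · intro h
      have := congrArg ψ h
      rwa [map_natCast, map_zero] at this
    · intro h
      by_contra hc
      have : ψ (c : K) ≠ 0 := fun hcc => hc (ψ.injective (by rwa [map_zero]))
      rw [map_natCast] at this
      exact this h
  have hnm_not_both : ¬(((k + m : ℕ) : Ω) = 0 ∧ (m : Ω) = 0) := by
    rintro ⟨hn, hmm⟩
    have hchar : (ringChar Ω) ∣ (k + m) := (ringChar.spec Ω (k + m)).1 hn
    have hchar' : (ringChar Ω) ∣ m := (ringChar.spec Ω m).1 hmm
    have : (ringChar Ω) ∣ 1 := hcop ▸ Nat.dvd_gcd hchar hchar'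
    exact CharP.ringChar_ne_one (Nat.dvd_one.1 this)
  by_cases hn0 : ((k + m : ℕ) : Ω) = 0
  · have hm0 : (m : Ω) ≠ 0 := fun h => hnm_not_both ⟨hn0, h⟩
    rw [hn0, zero_mul, zero_add] at e2
    exact (mul_ne_zero (mul_ne_zero hm0 hA0) (pow_ne_zero _ hθ0)) e2
  by_cases hm0 : (m : Ω) = 0
  · rw [hm0, zero_mul, zero_mul, add_zero] at e2
    exact (mul_ne_zero hn0 (pow_ne_zero _ hθ0)) e2
  -- main case: both (k+m : Ω) and (m : Ω) are nonzero
  have h2 : ((k + m : ℕ) : Ω) * θ ^ k = -((m : Ω) * A) := by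
    have hsplit : θ ^ (k + m - 1) = θ ^ k * θ ^ (m - 1) := by
      rw [← pow_add]
      congr 1
      omega
    rw [hsplit] at e2
    have hcancel : (((k + m : ℕ) : Ω) * θ ^ k + (m : Ω) * A) * θ ^ (m - 1) = 0 := by
      linear_combination e2
    rcases mul_eq_zero.1 hcancel with h | h
    · linear_combination h
    · exact absurd h (pow_ne_zero _ hθ0)
  have e1' : θ ^ k * θ ^ m + A * θ ^ m + B = 0 := by
    rw [← pow_add]; exact e1
  have h3 : (k : Ω) * A * θ ^ m = -(((k + m : ℕ) : Ω) * B) := by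
    have : ((k : ℕ) : Ω) = ((k + m : ℕ) : Ω) - (m : Ω) := by push_cast; ring
    rw [this]
    linear_combination ((k + m : ℕ) : Ω) * e1' - θ ^ m * h2
  by_cases hk0 : (k : Ω) = 0
  · rw [hk0, zero_mul, zero_mul] at h3
    have : ((k + m : ℕ) : Ω) * B = 0 := by linear_combination h3
    exact (mul_ne_zero hn0 hB0) this
  -- raise to powers and eliminate θ
  have h2m : ((k + m : ℕ) : Ω) ^ m * θ ^ (k * m) = (-1) ^ m * ((m : Ω) * A) ^ m := by
    have := congrArg (· ^ m) h2
    simp only [mul_pow, neg_pow ((m : Ω) * A) m, ← pow_mul] at this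
    linear_combination this
  have h3k : (k : Ω) ^ k * A ^ k * θ ^ (k * m) = (-1) ^ k * (((k + m : ℕ) : Ω) * B) ^ k := by
    have := congrArg (· ^ k) h3
    simp only [mul_pow, neg_pow ((((k + m : ℕ)) : Ω) * B) k, ← pow_mul, mul_comm m k] at this
    linear_combination this
  have key : ((-1) ^ m * ((k ^ k * m ^ m : ℕ) : ℤ) : Ω) * A ^ (k + m)
      = ((-1) ^ k * (((k + m) ^ (k + m) : ℕ) : ℤ) : Ω) * B ^ k := by
    push_cast
    rw [show ((k : Ω) + (m : Ω)) = ((k + m : ℕ) : Ω) by push_cast; ring]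
    linear_combination ((k + m : ℕ) : Ω) ^ m * h3k - (k : Ω) ^ k * A ^ k * h2m
  -- pull back to F
  set z : ℤ := (-1) ^ m * ((k ^ k * m ^ m : ℕ) : ℤ) with hz
  set w : ℤ := (-1) ^ k * (((k + m) ^ (k + m) : ℕ) : ℤ) with hw
  have keyF : (z : F) * a ^ (k + m) = (w : F) * b ^ k := by
    apply i.injective
    rw [map_mul, map_mul, map_pow, map_pow, map_intCast, map_intCast, hz, hw]
    push_cast
    push_cast at key
    linear_combination key
  have hzK : (z : K) = 0 := trinomial_aux_indep K (by omega) keyF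
  rw [hz] at hzK
  push_cast at hzK
  have hkK : (k : K) ≠ 0 := fun h => hk0 ((hψcast k).1 h)
  have hmK : (m : K) ≠ 0 := fun h => hm0 ((hψcast m).1 h)
  rcases mul_eq_zero.1 hzK with h | h
  · exact (pow_ne_zero m (neg_ne_zero.2 (one_ne_zero : (1 : K) ≠ 0))) h
  · rcases mul_eq_zero.1 h with h' | h'
    · exact (pow_ne_zero k hkK) h'
    · exact (pow_ne_zero m hmK) h'
end

section
/- A primitive permutation group on a finite set of n elements that contains a transposition is the full symmetric group S_n. -/
/-- A permutation group action is primitive if it is transitive and the only blocks are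
the trivial ones (subsingletons and the whole set). -/
def IsPrimitiveAction (G : Type*) (Ω : Type*) [Group G] [MulAction G Ω] : Prop :=
  MulAction.IsPretransitive G Ω ∧
    ∀ B : Set Ω, MulAction.IsBlock G B → B.Subsingleton ∨ B = Set.univ

open Pointwise

/-- Jordan's theorem: a primitive permutation group on a finite set containing a
transposition is the full symmetric group. -/
theorem eq_top_of_primitive_of_swap (Ω : Type) [Fintype Ω] [DecidableEq Ω]
    (G : Subgroup (Equiv.Perm Ω)) (hprim : IsPrimitiveAction G Ω)
    (τ : Equiv.Perm Ω) (hτG : τ ∈ G) (hτ : τ.IsSwap) :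
    G = ⊤ := by
  classical
  obtain ⟨a, b, hab, rfl⟩ := hτ
  -- the relation: x ~ y iff x = y or the swap of x and y lies in G
  set r : Ω → Ω → Prop := fun x y => x = y ∨ Equiv.swap x y ∈ G with hr
  have hsymm : ∀ {x y}, r x y → r y x := by
    rintro x y (rfl | h)
    · exact Or.inl rfl
    · exact Or.inr (by rwa [Equiv.swap_comm])
  have htrans : ∀ {x y z}, r x y → r y z → r x z := by
    rintro x y z (rfl | hxy) hyz
    · exact hyz
    rcases hyz with rfl | hyz
    · exact Or.inr hxy
    by_cases hxz : x = z
    · exact Or.inl hxz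
    by_cases hxy' : x = y
    · subst hxy'; exact Or.inr hyz
    · refine Or.inr ?_
      have := Equiv.swap_mul_swap_mul_swap (x := x) (y := y) (z := z) hxy' hxz
      have hmem : Equiv.swap z x ∈ G := by
        rw [← this]; exact mul_mem (mul_mem hyz hxy) hyz
      rwa [Equiv.swap_comm] at hmem
  -- invariance under G
  have hinv : ∀ (g : G) (x y : Ω), r x y → r ((g : Equiv.Perm Ω) x) ((g : Equiv.Perm Ω) y) := by
    rintro g x y (rfl | h)
    · exact Or.inl rfl
    · refine Or.inr ?_
      rw [Equiv.swap_apply_apply]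
      exact mul_mem (mul_mem g.2 h) (inv_mem g.2)
  -- B is the class of a
  set B : Set Ω := {x | r a x} with hB
  -- the action of g : G on Ω
  have hsmul : ∀ (g : G) (x : Ω), g • x = (g : Equiv.Perm Ω) x := fun g x => rfl
  have hgB : ∀ g : G, g • B = {x | r ((g : Equiv.Perm Ω) a) x} := by
    intro g
    ext z
    constructor
    · rintro ⟨x, hx, rfl⟩
      exact hinv g a x hx
    · intro hz
      refine ⟨(g : Equiv.Perm Ω)⁻¹ z, ?_, by simp [hsmul]⟩
      have := hinv g⁻¹ _ _ hz
      simpa [hB] using this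
  have hblock : MulAction.IsBlock G B := by
    rw [MulAction.isBlock_iff_smul_eq_of_nonempty]
    intro g ⟨y, hy1, hy2⟩
    rw [hgB] at hy1 ⊢
    have key : r ((g : Equiv.Perm Ω) a) a := htrans hy1 (hsymm hy2)
    ext z
    simp only [Set.mem_setOf_eq, hB]
    exact ⟨fun h => htrans (hsymm key) h, fun h => htrans key h⟩
  have hBuniv : B = Set.univ := by
    rcases hprim.2 B hblock with h | h
    · exfalso
      exact hab (h (Or.inl rfl) (Or.inr hτG))
    · exact h
  -- every swap is in G
  have hswap : ∀ x y : Ω, x ≠ y → Equiv.swap x y ∈ G := by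
    intro x y hxy
    have hx : r a x := by have : x ∈ B := by rw [hBuniv]; trivial
                          exact this
    have hy : r a y := by have : y ∈ B := by rw [hBuniv]; trivial
                          exact this
    rcases htrans (hsymm hx) hy with h | h
    · exact absurd h hxy
    · exact h
  -- conclude
  rw [eq_top_iff, ← Equiv.Perm.closure_isSwap, Subgroup.closure_le]
  rintro σ ⟨x, y, hxy, rfl⟩
  exact hswap x y hxy
end

section
/- Let K be a field, n > m ≥ 1 integers, α ∈ K with α ≠ 0, and suppose 2·n·m·(n−m) ≠ 0 in K. Then (x − α^m)^3 does not divide the polynomial m^m·x^n − (n·α^{n−m}·x − (n−m)·α^n)^m in K[x]; equivalently, α^m is a root of multiplicity exactly 2. -/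
open Polynomial

private lemma cube_dvd_second_deriv {R : Type} [CommRing R] (a : R) (p : R[X])
    (h : (X - C a) ^ 3 ∣ p) : (derivative (derivative p)).eval a = 0 := by
  obtain ⟨q, rfl⟩ := h
  simp [derivative_mul, derivative_pow]

/-- If `2·n·m·(n−m) ≠ 0` in `K` and `α ≠ 0`, then `α^m` is a root of multiplicity exactly
two of the restriction of the curve `x^n = y^m` to its tangent line at `(α^m, α^n)`:
the cube `(x − α^m)^3` does not divide the restricted polynomial. -/
theorem tangent_line_multiplicity_exactly_two (K : Type) [Field K] (n m : ℕ) (hm : 1 ≤ m)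
    (hmn : m < n) (α : K) (hα : α ≠ 0)
    (hchar : (2 : K) * (n : K) * (m : K) * ((n : K) - (m : K)) ≠ 0) :
    ¬ ((X - C (α ^ m)) ^ 3 ∣
      (C ((m : K) ^ m) * X ^ n -
        (C ((n : K) * α ^ (n - m)) * X - C (((n : K) - (m : K)) * α ^ n)) ^ m)) := by
  intro hdvd
  have h := cube_dvd_second_deriv _ _ hdvd
  have hn0 : (n : K) ≠ 0 := fun e => hchar (by rw [e]; ring)
  have hm0 : (m : K) ≠ 0 := fun e => hchar (by rw [e]; ring)
  have hnm : (n : K) - (m : K) ≠ 0 := fun e => hchar (by rw [e]; ring)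
  simp [derivative_mul, derivative_pow] at h
  rcases eq_or_lt_of_le hm with h1 | h2
  · -- m = 1
    subst h1
    obtain ⟨e, he⟩ : ∃ e, n = e + 2 := ⟨n - 2, by omega⟩
    subst he
    push_cast at h hn0 hnm
    simp at h
    rcases h with h | h | h
    · exact hn0 h
    · exact hnm (by linear_combination h)
    · exact hα h.1
  · obtain ⟨k, hk⟩ : ∃ k, m = k + 2 := ⟨m - 2, by omega⟩
    obtain ⟨d, hd⟩ : ∃ d, n = m + d + 1 := ⟨n - m - 1, by omega⟩
    subst hk hd
    push_cast at h hn0 hm0 hnm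
    rw [show k + 2 + d - 1 = k + d + 1 from by omega,
        show k + 2 + d - (k + 1) = d + 1 from by omega] at h
    rw [show ((k:K) + 2 + (d:K) + 1) * α ^ (d + 1) * α ^ (k + 2) -
          ((k:K) + 2 + (d:K) + 1 - ((k:K) + 2)) * α ^ (k + 2 + d + 1)
        = ((k:K) + 2) * α ^ (k + 2 + d + 1) from by
      rw [mul_assoc, ← pow_add, show d + 1 + (k + 2) = k + 2 + d + 1 from by omega]; ring] at h
    rw [mul_pow, ← pow_mul, ← pow_mul,
        show (k + 2) * (k + d + 1) = (k + 2 + d + 1) * k + (d + 1) + (d + 1) from by ring,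
        pow_add, pow_add] at h
    have hd1 : (d : K) + 1 ≠ 0 := fun e => hnm (by linear_combination e)
    have key : ((k:K) + 2) ^ k * ((k:K) + 2) * ((k:K) + 2 + (d:K) + 1) * ((d:K) + 1)
        * (α ^ ((k + 2 + d + 1) * k) * α ^ (d + 1) * α ^ (d + 1)) = 0 := by
      linear_combination h
    exact (mul_ne_zero (mul_ne_zero (mul_ne_zero (mul_ne_zero
      (pow_ne_zero _ hm0) hm0) hn0) hd1)
      (mul_ne_zero (mul_ne_zero (pow_ne_zero _ hα) (pow_ne_zero _ hα)) (pow_ne_zero _ hα))) key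
end

section
/- In the polynomial ring F_2[a,b][x], the trinomial x^{24} + a·x + b divides the polynomial x^{2048} + b^{64}·x^{512} + a^{80}·b^8·x^{16} + a^{72}·b^{16}·x^8 + a^{89}·x + a^{88}·b + a^{64}·b^{24}. -/
open Polynomial

/-- Serre's linearization: in `F₂[a,b][x]` the trinomial `x²⁴ + a·x + b` divides the
additive-plus-constant polynomial
`x²⁰⁴⁸ + b⁶⁴·x⁵¹² + a⁸⁰·b⁸·x¹⁶ + a⁷²·b¹⁶·x⁸ + a⁸⁹·x + a⁸⁸·b + a⁶⁴·b²⁴`. -/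
theorem serre_linearization_deg24 :
    ∀ (a b : MvPolynomial (Fin 2) (ZMod 2)),
      a = MvPolynomial.X 0 → b = MvPolynomial.X 1 →
      (X ^ 24 + C a * X + C b : Polynomial (MvPolynomial (Fin 2) (ZMod 2))) ∣
        (X ^ 2048 + C (b ^ 64) * X ^ 512 + C (a ^ 80 * b ^ 8) * X ^ 16 +
          C (a ^ 72 * b ^ 16) * X ^ 8 + C (a ^ 89) * X + C (a ^ 88 * b + a ^ 64 * b ^ 24)) := by
  intro a b ha hb
  set f : Polynomial (MvPolynomial (Fin 2) (ZMod 2)) := X ^ 24 + C a * X + C b with hf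
  rw [← AdjoinRoot.mk_eq_zero]
  have h2 : (2 : AdjoinRoot f) = 0 := by
    have hS : (2 : MvPolynomial (Fin 2) (ZMod 2)) = 0 := by
      have := CharP.cast_eq_zero (MvPolynomial (Fin 2) (ZMod 2)) 2
      simpa using this
    calc (2 : AdjoinRoot f) = AdjoinRoot.of f (2 : MvPolynomial (Fin 2) (ZMod 2)) :=
          (map_ofNat (AdjoinRoot.of f) 2).symm
    _ = 0 := by rw [hS, map_zero]
  set A : AdjoinRoot f := AdjoinRoot.of f a with hA
  set B : AdjoinRoot f := AdjoinRoot.of f b with hB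
  set x : AdjoinRoot f := AdjoinRoot.root f with hx
  have hf0 : x ^ 24 + A * x + B = 0 := by
    have h0 := AdjoinRoot.mk_self (f := f)
    rw [hf] at h0
    simpa [map_add, map_mul, map_pow, hA, hB, hx] using h0
  have h : x ^ 24 = A * x + B := by linear_combination hf0 - (A * x + B) * h2
  have sq : ∀ u v w : AdjoinRoot f, w = u + v → w ^ 2 = u ^ 2 + v ^ 2 := by
    intro u v w hw
    rw [hw]
    linear_combination (u * v) * h2
  have s1 : x ^ 48 = A ^ 2 * x ^ 2 + B ^ 2 := by
    have := sq (A * x) B (x ^ 24) h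
    linear_combination this
  have s2 : x ^ 96 = A ^ 4 * x ^ 4 + B ^ 4 := by
    have := sq (A ^ 2 * x ^ 2) (B ^ 2) (x ^ 48) s1
    linear_combination this
  have s3 : x ^ 192 = A ^ 8 * x ^ 8 + B ^ 8 := by
    have := sq (A ^ 4 * x ^ 4) (B ^ 4) (x ^ 96) s2
    linear_combination this
  have s4 : x ^ 384 = A ^ 16 * x ^ 16 + B ^ 16 := by
    have := sq (A ^ 8 * x ^ 8) (B ^ 8) (x ^ 192) s3
    linear_combination this
  have s5 : x ^ 768 = A ^ 32 * x ^ 32 + B ^ 32 := by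
    have := sq (A ^ 16 * x ^ 16) (B ^ 16) (x ^ 384) s4
    linear_combination this
  have s6 : x ^ 1536 = A ^ 64 * x ^ 64 + B ^ 64 := by
    have := sq (A ^ 32 * x ^ 32) (B ^ 32) (x ^ 768) s5
    linear_combination this
  have h576 : x ^ 576 = A ^ 25 * x + A ^ 24 * B + A ^ 16 * B ^ 8 * x ^ 16 +
      A ^ 8 * B ^ 16 * x ^ 8 + B ^ 24 := by
    linear_combination (x ^ 192) * s4 + (A ^ 16 * x ^ 16 + B ^ 16) * s3 + A ^ 24 * h
  have key : x ^ 2048 + B ^ 64 * x ^ 512 + A ^ 80 * B ^ 8 * x ^ 16 +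
      A ^ 72 * B ^ 16 * x ^ 8 + A ^ 89 * x + (A ^ 88 * B + A ^ 64 * B ^ 24) = 0 := by
    linear_combination (x ^ 512) * s6 + A ^ 64 * h576 +
      (B ^ 64 * x ^ 512 + A ^ 80 * B ^ 8 * x ^ 16 + A ^ 72 * B ^ 16 * x ^ 8 + A ^ 89 * x +
        A ^ 88 * B + A ^ 64 * B ^ 24) * h2
  have hpush : AdjoinRoot.mk f (X ^ 2048 + C (b ^ 64) * X ^ 512 + C (a ^ 80 * b ^ 8) * X ^ 16 +
          C (a ^ 72 * b ^ 16) * X ^ 8 + C (a ^ 89) * X + C (a ^ 88 * b + a ^ 64 * b ^ 24))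
      = x ^ 2048 + B ^ 64 * x ^ 512 + A ^ 80 * B ^ 8 * x ^ 16 +
          A ^ 72 * B ^ 16 * x ^ 8 + A ^ 89 * x + (A ^ 88 * B + A ^ 64 * B ^ 24) := by
    simp [map_add, map_mul, map_pow, hA, hB, hx]
  rw [hpush, key]
end

section
/- Let c ∈ F_9 satisfy c² = c + 1. Then the polynomial x^{24} − x + c ∈ F_9[x] factors as a product of six irreducible polynomials over F_9, of degrees 1, 2, 3, 4, 6, and 8. -/
open Polynomial

set_option linter.unusedSectionVars false


namespace X24F9

variable {K : Type*} [Field K] [Fintype K]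

theorem irred_dvd (g : K[X]) (hg : Irreducible g) :
    g ∣ X ^ (Fintype.card K ^ g.natDegree) - X := by
  haveI := Fact.mk hg
  have hg0 : g ≠ 0 := hg.ne_zero
  let pb := AdjoinRoot.powerBasis hg0
  haveI : Fintype (AdjoinRoot g) := Module.fintypeOfFintype pb.basis
  have hcard : Fintype.card (AdjoinRoot g) = Fintype.card K ^ g.natDegree := by
    rw [Module.card_fintype pb.basis, Fintype.card_fin, AdjoinRoot.powerBasis_dim]
  have h := FiniteField.pow_card (AdjoinRoot.root g)
  rw [hcard] at h
  rw [← AdjoinRoot.mk_eq_zero, map_sub, map_pow, AdjoinRoot.mk_X, h, sub_self]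

theorem irreducible_of_coprime (f : K[X]) (hm : f.Monic) (h2 : 2 ≤ f.natDegree)
    (H : ∀ d, 1 ≤ d → 2 * d ≤ f.natDegree →
      IsCoprime f (X ^ (Fintype.card K ^ d) - X)) : Irreducible f := by
  have hf0 : f ≠ 0 := hm.ne_zero
  by_contra hni
  have hnu : ¬IsUnit f := by
    rw [Polynomial.isUnit_iff_degree_eq_zero]
    intro hdeg
    rw [degree_eq_natDegree hf0] at hdeg
    have : f.natDegree = 0 := by exact_mod_cast hdeg
    omega
  rw [irreducible_iff] at hni
  push_neg at hni
  obtain ⟨a, b, hab, hna, hnb⟩ := hni hnu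
  have key : ∀ p : K[X], p ≠ 0 → ¬IsUnit p → 1 ≤ p.natDegree := by
    intro p hp hu
    rcases Nat.eq_zero_or_pos p.natDegree with h | h
    · exact absurd (Polynomial.isUnit_iff_degree_eq_zero.2
        (by simp [degree_eq_natDegree hp, h])) hu
    · exact h
  have ha0 : a ≠ 0 := by rintro rfl; simp at hab; exact hf0 hab
  have hb0 : b ≠ 0 := by rintro rfl; simp at hab; exact hf0 hab
  have hadeg : 1 ≤ a.natDegree := key a ha0 hna
  have hbdeg : 1 ≤ b.natDegree := key b hb0 hnb
  have hsum : a.natDegree + b.natDegree = f.natDegree := by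
    rw [hab, natDegree_mul ha0 hb0]
  -- pick the factor of smaller degree
  obtain ⟨g0, hg0f, hg0nu, hg00, hg0small⟩ :
      ∃ g0 : K[X], g0 ∣ f ∧ ¬IsUnit g0 ∧ g0 ≠ 0 ∧ 2 * g0.natDegree ≤ f.natDegree := by
    rcases le_total a.natDegree b.natDegree with h | h
    · exact ⟨a, Dvd.intro b hab.symm, hna, ha0, by omega⟩
    · exact ⟨b, Dvd.intro_left a hab.symm, hnb, hb0, by omega⟩
  obtain ⟨p, hp, hpdvd⟩ := WfDvdMonoid.exists_irreducible_factor hg0nu hg00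
  have hpd1 : 1 ≤ p.natDegree := key p hp.ne_zero hp.not_isUnit
  have hpd2 : 2 * p.natDegree ≤ f.natDegree :=
    le_trans (by have := Polynomial.natDegree_le_of_dvd hpdvd hg00; omega) hg0small
  exact hp.not_isUnit <| (H p.natDegree hpd1 hpd2).isUnit_of_dvd'
    (hpdvd.trans hg0f) (irred_dvd p hp)

theorem chain_step {f s t q : K[X]} {m : ℕ} (h : f ∣ X ^ m - s)
    (hid : q * f + t = s * s * s) : f ∣ X ^ (3 * m) - t := by
  have h3 : f ∣ (X ^ m) ^ 3 - s ^ 3 := h.trans (sub_dvd_pow_sub_pow _ _ 3)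
  have he : X ^ (3 * m) - t = ((X ^ m) ^ 3 - s ^ 3) + q * f := by
    rw [mul_comm 3 m, pow_mul]
    linear_combination -hid
  rw [he]
  exact dvd_add h3 (Dvd.intro_left q rfl)


abbrev GF := GaloisField 3 2
abbrev F := ZMod 3 × ZMod 3

def fadd (x y : F) : F := (x.1 + y.1, x.2 + y.2)
def fmul (x y : F) : F := (x.1 * y.1 + x.2 * y.2, x.1 * y.2 + x.2 * y.1 + x.2 * y.2)

def ladd : List F → List F → List F
  | [], m => m
  | l, [] => l
  | a :: l, b :: m => fadd a b :: ladd l m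

def smulL (a : F) (m : List F) : List F := m.map (fmul a)

def lmul : List F → List F → List F
  | [], _ => []
  | a :: l, m => ladd (smulL a m) ((0, 0) :: lmul l m)

noncomputable def phi (c : GF) (x : F) : GF :=
  ZMod.castHom (dvd_refl 3) GF x.1 + ZMod.castHom (dvd_refl 3) GF x.2 * c

noncomputable def toPoly (c : GF) : List F → GF[X]
  | [] => 0
  | a :: l => C (phi c a) + X * toPoly c l

variable {c : GF}

theorem phi_add (x y : F) : phi c (fadd x y) = phi c x + phi c y := by
  simp only [phi, fadd, map_add]; ring

theorem phi_zero : phi c (0, 0) = 0 := by simp [phi]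

theorem phi_zero' : phi c 0 = 0 := by simp [phi]

theorem phi_mul (hc : c ^ 2 = c + 1) (x y : F) :
    phi c (fmul x y) = phi c x * phi c y := by
  simp only [phi, fmul, map_add, map_mul]
  linear_combination -(ZMod.castHom (dvd_refl 3) GF x.2 * ZMod.castHom (dvd_refl 3) GF y.2) * hc

theorem toPoly_ladd (l m : List F) :
    toPoly c (ladd l m) = toPoly c l + toPoly c m := by
  induction l generalizing m with
  | nil => simp [ladd, toPoly]
  | cons a l ih =>
    cases m with
    | nil => simp [ladd, toPoly]
    | cons b m => simp only [ladd, toPoly, phi_add, map_add, ih]; ring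

theorem toPoly_smul (hc : c ^ 2 = c + 1) (a : F) (l : List F) :
    toPoly c (smulL a l) = C (phi c a) * toPoly c l := by
  induction l with
  | nil => simp [smulL, toPoly]
  | cons b l ih => simp only [smulL, List.map_cons, toPoly, phi_mul hc, map_mul] at *; rw [ih]; ring

theorem toPoly_lmul (hc : c ^ 2 = c + 1) (l m : List F) :
    toPoly c (lmul l m) = toPoly c l * toPoly c m := by
  induction l with
  | nil => simp [lmul, toPoly]
  | cons a l ih =>
    simp only [lmul, toPoly, toPoly_ladd, toPoly_smul hc, ih, phi_zero, map_zero]; ring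

theorem toPoly_X : toPoly c [(0, 0), (1, 0)] = X := by
  simp [toPoly, phi]

theorem toPoly_one_pad (n : ℕ) :
    toPoly c ((1, 0) :: List.replicate n (0, 0)) = 1 := by
  have h : ∀ k, toPoly c (List.replicate k (0 : F)) = 0 := by
    intro k; induction k with
    | zero => simp [toPoly]
    | succ k ih => simp [List.replicate, toPoly, ih, phi_zero']
  simp [toPoly, phi, show List.replicate n ((0, 0) : F) = List.replicate n 0 from rfl, h n]


def L1 : List F := [(2, 2), (1, 0)]
def L2 : List F := [(1, 0), (0, 2), (1, 0)]
def s2_0 : List F := [(0, 0), (1, 0)]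
def s2_1 : List F := [(0, 2), (0, 1)]
def q2_0 : List F := [(0, 1), (1, 0)]
def s2_2 : List F := [(0, 1), (2, 0)]
def q2_1 : List F := [(2, 0), (1, 2)]
def w2_1 : List F := [(0, 1), (1, 0)]
def u2_1 : List F := [(1, 2)]
def v2_1 : List F := [(1, 0), (2, 1)]
def L3 : List F := [(1, 0), (1, 2), (1, 0), (1, 0)]
def s3_0 : List F := [(0, 0), (1, 0), (0, 0)]
def s3_1 : List F := [(2, 0), (2, 1), (2, 0)]
def q3_0 : List F := [(1, 0), (0, 0), (0, 0), (0, 0)]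
def s3_2 : List F := [(2, 2), (1, 1), (1, 2)]
def q3_1 : List F := [(0, 1), (0, 2), (1, 0), (2, 0)]
def w3_1 : List F := [(2, 2), (0, 1), (1, 2)]
def u3_1 : List F := [(2, 2), (0, 1)]
def v3_1 : List F := [(0, 1), (2, 2), (1, 1)]
def L4 : List F := [(1, 2), (1, 0), (0, 1), (2, 2), (1, 0)]
def s4_0 : List F := [(0, 0), (1, 0), (0, 0), (0, 0)]
def s4_1 : List F := [(0, 0), (0, 0), (0, 0), (1, 0)]
def q4_0 : List F := [(0, 0), (0, 0), (0, 0), (0, 0), (0, 0), (0, 0)]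
def s4_2 : List F := [(2, 2), (2, 1), (2, 2), (1, 0)]
def q4_1 : List F := [(2, 1), (2, 0), (2, 1), (2, 2), (1, 1), (1, 0)]
def s4_3 : List F := [(2, 1), (2, 0), (0, 2), (1, 0)]
def q4_2 : List F := [(0, 1), (1, 0), (0, 2), (2, 2), (1, 1), (1, 0)]
def s4_4 : List F := [(1, 1), (0, 2), (2, 1), (2, 2)]
def q4_3 : List F := [(2, 0), (2, 1), (1, 2), (2, 2), (1, 1), (1, 0)]
def w4_1 : List F := [(2, 2), (1, 1), (2, 2), (1, 0)]
def u4_1 : List F := [(1, 1), (2, 2), (0, 2)]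
def v4_1 : List F := [(2, 0), (2, 1), (1, 1), (0, 1)]
def w4_2 : List F := [(1, 1), (2, 2), (2, 1), (2, 2)]
def u4_2 : List F := [(1, 1), (0, 0), (2, 0)]
def v4_2 : List F := [(1, 0), (0, 0), (0, 1), (1, 1)]
def L5 : List F := [(1, 2), (2, 1), (2, 2), (2, 1), (0, 1), (2, 2), (1, 0)]
def s5_0 : List F := [(0, 0), (1, 0), (0, 0), (0, 0), (0, 0), (0, 0)]
def s5_1 : List F := [(0, 0), (0, 0), (0, 0), (1, 0), (0, 0), (0, 0)]
def q5_0 : List F := [(0, 0), (0, 0), (0, 0), (0, 0), (0, 0), (0, 0), (0, 0), (0, 0), (0, 0), (0, 0)]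
def s5_2 : List F := [(2, 1), (1, 1), (1, 0), (1, 2), (0, 2), (0, 0)]
def q5_1 : List F := [(1, 0), (2, 2), (1, 1), (1, 0), (0, 0), (0, 0), (0, 0), (0, 0), (0, 0), (0, 0)]
def s5_3 : List F := [(0, 0), (0, 0), (0, 0), (0, 2), (1, 0), (0, 0)]
def q5_2 : List F := [(1, 1), (1, 1), (1, 2), (2, 2), (0, 2), (0, 1), (2, 1), (0, 0), (0, 0), (0, 0)]
def s5_4 : List F := [(2, 2), (2, 1), (0, 1), (2, 0), (1, 1), (2, 1)]
def q5_3 : List F := [(2, 1), (0, 1), (0, 1), (0, 1), (2, 2), (1, 1), (1, 0), (0, 0), (0, 0), (0, 0)]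
def s5_5 : List F := [(2, 2), (1, 2), (2, 0), (1, 2), (2, 1), (1, 2)]
def q5_4 : List F := [(1, 2), (0, 2), (1, 2), (1, 2), (0, 1), (1, 0), (2, 1), (1, 2), (2, 1), (0, 2)]
def s5_6 : List F := [(1, 2), (1, 1), (1, 0), (2, 0), (0, 2), (0, 1)]
def q5_5 : List F := [(1, 1), (2, 0), (2, 2), (0, 0), (0, 1), (2, 1), (0, 0), (2, 1), (1, 2), (0, 1)]
def w5_1 : List F := [(2, 1), (0, 1), (1, 0), (1, 2), (0, 2), (0, 0)]
def u5_1 : List F := [(1, 2), (0, 0), (2, 1), (0, 0), (0, 0)]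
def v5_1 : List F := [(1, 0), (1, 0), (0, 1), (0, 0), (2, 2), (0, 0)]
def w5_2 : List F := [(2, 2), (1, 1), (0, 1), (2, 0), (1, 1), (2, 1)]
def u5_2 : List F := [(2, 0), (0, 2), (2, 2), (1, 2), (1, 2)]
def v5_2 : List F := [(1, 0), (0, 0), (0, 0), (1, 2), (2, 0), (1, 0)]
def w5_3 : List F := [(1, 2), (0, 1), (1, 0), (2, 0), (0, 2), (0, 1)]
def u5_3 : List F := [(1, 0), (1, 2), (2, 0), (1, 0), (2, 0)]
def v5_3 : List F := [(2, 2), (1, 1), (2, 1), (2, 0), (0, 2), (2, 1)]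
def L6 : List F := [(0, 2), (2, 2), (1, 0), (0, 2), (0, 1), (0, 1), (0, 2), (2, 1), (1, 0)]
def s6_0 : List F := [(0, 0), (1, 0), (0, 0), (0, 0), (0, 0), (0, 0), (0, 0), (0, 0)]
def s6_1 : List F := [(0, 0), (0, 0), (0, 0), (1, 0), (0, 0), (0, 0), (0, 0), (0, 0)]
def q6_0 : List F := [(0, 0), (0, 0), (0, 0), (0, 0), (0, 0), (0, 0), (0, 0), (0, 0), (0, 0), (0, 0), (0, 0), (0, 0), (0, 0), (0, 0)]
def s6_2 : List F := [(2, 0), (0, 0), (0, 2), (1, 0), (1, 1), (1, 2), (2, 2), (2, 0)]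
def q6_1 : List F := [(1, 2), (1, 0), (0, 0), (0, 0), (0, 0), (0, 0), (0, 0), (0, 0), (0, 0), (0, 0), (0, 0), (0, 0), (0, 0), (0, 0)]
def s6_3 : List F := [(0, 0), (0, 0), (0, 0), (0, 2), (1, 0), (0, 0), (0, 0), (0, 0)]
def q6_2 : List F := [(2, 1), (2, 0), (2, 0), (1, 2), (1, 1), (2, 0), (2, 0), (1, 0), (2, 1), (1, 2), (0, 1), (1, 0), (2, 1), (2, 0)]
def s6_4 : List F := [(1, 1), (2, 0), (1, 0), (2, 2), (1, 0), (1, 2), (1, 1), (1, 0)]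
def q6_3 : List F := [(0, 1), (0, 1), (2, 0), (1, 2), (1, 0), (0, 0), (0, 0), (0, 0), (0, 0), (0, 0), (0, 0), (0, 0), (0, 0), (0, 0)]
def s6_5 : List F := [(2, 2), (1, 2), (2, 0), (0, 1), (0, 2), (2, 0), (2, 2), (2, 1)]
def q6_4 : List F := [(0, 0), (1, 1), (0, 0), (0, 2), (2, 0), (1, 1), (2, 0), (2, 2), (1, 2), (2, 1), (0, 2), (2, 0), (1, 2), (1, 0)]
def s6_6 : List F := [(0, 0), (2, 0), (1, 0), (0, 1), (1, 2), (2, 0), (1, 0), (0, 0)]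
def q6_5 : List F := [(0, 2), (2, 0), (1, 2), (2, 0), (0, 2), (1, 2), (2, 2), (1, 2), (1, 1), (0, 0), (1, 0), (0, 1), (1, 0), (0, 2)]
def s6_7 : List F := [(0, 0), (1, 2), (1, 1), (1, 0), (0, 2), (2, 1), (1, 0), (1, 1)]
def q6_6 : List F := [(0, 0), (1, 1), (2, 2), (2, 2), (2, 0), (1, 1), (1, 1), (0, 0), (2, 0), (1, 2), (1, 0), (0, 0), (0, 0), (0, 0)]
def s6_8 : List F := [(0, 1), (1, 1), (1, 1), (0, 0), (1, 1), (2, 2), (1, 2), (2, 2)]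
def q6_7 : List F := [(1, 0), (0, 0), (2, 2), (2, 2), (2, 2), (0, 1), (2, 0), (2, 1), (1, 1), (2, 0), (0, 2), (1, 1), (0, 1), (2, 2)]
def w6_1 : List F := [(2, 0), (2, 0), (0, 2), (1, 0), (1, 1), (1, 2), (2, 2), (2, 0)]
def u6_1 : List F := [(1, 0), (2, 2), (2, 0), (1, 0), (0, 2), (2, 2), (0, 0)]
def v6_1 : List F := [(2, 2), (1, 2), (0, 1), (0, 2), (1, 2), (2, 1), (2, 2), (0, 0)]
def w6_2 : List F := [(1, 1), (1, 0), (1, 0), (2, 2), (1, 0), (1, 2), (1, 1), (1, 0)]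
def u6_2 : List F := [(0, 2), (2, 2), (2, 2), (2, 0), (2, 2), (2, 0), (0, 0)]
def v6_2 : List F := [(1, 2), (0, 0), (1, 1), (0, 0), (0, 0), (2, 1), (1, 0), (0, 0)]
def w6_3 : List F := [(0, 0), (1, 0), (1, 0), (0, 1), (1, 2), (2, 0), (1, 0), (0, 0)]
def u6_3 : List F := [(1, 2), (2, 0), (1, 1), (2, 2), (0, 0), (1, 0), (0, 0)]
def v6_3 : List F := [(0, 1), (2, 1), (1, 2), (0, 2), (0, 0), (2, 0), (0, 2), (2, 0)]
def w6_4 : List F := [(0, 1), (0, 1), (1, 1), (0, 0), (1, 1), (2, 2), (1, 2), (2, 2)]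
def u6_4 : List F := [(0, 2), (2, 1), (1, 0), (0, 2), (1, 2), (0, 1), (0, 0)]
def v6_4 : List F := [(2, 0), (2, 0), (1, 1), (0, 0), (2, 1), (0, 0), (2, 1), (0, 0)]
def Ltarget : List F := [(0, 1), (2, 0), (0, 0), (0, 0), (0, 0), (0, 0), (0, 0), (0, 0), (0, 0), (0, 0), (0, 0), (0, 0), (0, 0), (0, 0), (0, 0), (0, 0), (0, 0), (0, 0), (0, 0), (0, 0), (0, 0), (0, 0), (0, 0), (0, 0), (1, 0)]

theorem hfe1 (c : GF) : toPoly c L1 = 2 + 2 * C c + X := by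
  simp only [L1, toPoly, phi, map_zero, map_one, map_ofNat, map_add, map_mul, zero_mul,
    one_mul, mul_zero, add_zero, zero_add]; ring

theorem deg1 (c : GF) : (toPoly c L1).natDegree = 1 := by
  rw [hfe1]; compute_degree!

theorem irr1 (c : GF) : Irreducible (toPoly c L1) :=
  Polynomial.irreducible_of_degree_eq_one (by rw [hfe1]; compute_degree!)

theorem hfe2 (c : GF) : toPoly c L2 = 1 + 2 * C c * X + X ^ 2 := by
  simp only [L2, toPoly, phi, map_zero, map_one, map_ofNat, map_add, map_mul, zero_mul,
    one_mul, mul_zero, add_zero, zero_add]; ring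

theorem deg2 (c : GF) : (toPoly c L2).natDegree = 2 := by
  rw [hfe2]; compute_degree!

theorem irr2 (c : GF) (hc : c ^ 2 = c + 1) : Irreducible (toPoly c L2) := by
  haveI : Fintype GF := Fintype.ofFinite _
  have hcard : Fintype.card GF = 9 := by
    rw [← Nat.card_eq_fintype_card, GaloisField.card 3 2 (by norm_num)]; norm_num
  apply irreducible_of_coprime _ (by rw [Monic.def, Polynomial.leadingCoeff, deg2, hfe2]; compute_degree!) (by rw [deg2]; try norm_num)
  intro d hd1 hd2
  rw [deg2 c] at hd2
  rw [hcard]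
  have hub : d ≤ 4 := by omega
  have h0 : toPoly c L2 ∣ X ^ 1 - toPoly c s2_0 := by
    rw [show toPoly c s2_0 = X by
      simp only [s2_0, toPoly, phi, map_zero, map_one, map_ofNat, map_add, map_mul, zero_mul,
    one_mul, mul_zero, add_zero, zero_add]; ring]
    simp
  have e0 : toPoly c q2_0 * toPoly c L2 + toPoly c s2_1
      = toPoly c s2_0 * toPoly c s2_0 * toPoly c s2_0 := by
    have h := congrArg (toPoly c)
      (show ladd (lmul q2_0 L2) s2_1 = lmul (lmul s2_0 s2_0) s2_0 by decide)
    simpa only [toPoly_ladd, toPoly_lmul hc] using h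
  have h1 : toPoly c L2 ∣ X ^ 3 - toPoly c s2_1 := by
    have := chain_step h0 e0; norm_num at this; exact this
  have e1 : toPoly c q2_1 * toPoly c L2 + toPoly c s2_2
      = toPoly c s2_1 * toPoly c s2_1 * toPoly c s2_1 := by
    have h := congrArg (toPoly c)
      (show ladd (lmul q2_1 L2) s2_2 = lmul (lmul s2_1 s2_1) s2_1 by decide)
    simpa only [toPoly_ladd, toPoly_lmul hc] using h
  have h2 : toPoly c L2 ∣ X ^ 9 - toPoly c s2_2 := by
    have := chain_step h1 e1; norm_num at this; exact this
  interval_cases d <;> try omega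
  · rw [show (9:ℕ) ^ 1 = 9 by norm_num]
    obtain ⟨t, ht⟩ := h2
    have hw : toPoly c w2_1 = toPoly c s2_2 - X := by
      have h := congrArg (toPoly c) (show ladd w2_1 [(0, 0), (1, 0)] = s2_2 by decide)
      rw [toPoly_ladd, toPoly_X] at h
      linear_combination h
    have hbez : toPoly c u2_1 * toPoly c L2 + toPoly c v2_1 * toPoly c w2_1 = 1 := by
      have h := congrArg (toPoly c)
        (show ladd (lmul u2_1 L2) (lmul v2_1 w2_1) = (1, 0) :: List.replicate 2 (0, 0) by decide)
      simpa only [toPoly_ladd, toPoly_lmul hc, toPoly_one_pad] using h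
    have hcop : IsCoprime (toPoly c L2) (toPoly c w2_1) := ⟨toPoly c u2_1, toPoly c v2_1, hbez⟩
    have hfin := hcop.add_mul_left_right t
    have heq : toPoly c w2_1 + toPoly c L2 * t = X ^ 9 - X := by
      rw [hw]; linear_combination -ht
    rwa [heq] at hfin

theorem hfe3 (c : GF) : toPoly c L3 = 1 + 1 * X + 2 * C c * X + 1 * X ^ 2 + X ^ 3 := by
  simp only [L3, toPoly, phi, map_zero, map_one, map_ofNat, map_add, map_mul, zero_mul,
    one_mul, mul_zero, add_zero, zero_add]; ring

theorem deg3 (c : GF) : (toPoly c L3).natDegree = 3 := by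
  rw [hfe3]; compute_degree!

theorem irr3 (c : GF) (hc : c ^ 2 = c + 1) : Irreducible (toPoly c L3) := by
  haveI : Fintype GF := Fintype.ofFinite _
  have hcard : Fintype.card GF = 9 := by
    rw [← Nat.card_eq_fintype_card, GaloisField.card 3 2 (by norm_num)]; norm_num
  apply irreducible_of_coprime _ (by rw [Monic.def, Polynomial.leadingCoeff, deg3, hfe3]; compute_degree!) (by rw [deg3]; try norm_num)
  intro d hd1 hd2
  rw [deg3 c] at hd2
  rw [hcard]
  have hub : d ≤ 4 := by omega
  have h0 : toPoly c L3 ∣ X ^ 1 - toPoly c s3_0 := by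
    rw [show toPoly c s3_0 = X by
      simp only [s3_0, toPoly, phi, map_zero, map_one, map_ofNat, map_add, map_mul, zero_mul,
    one_mul, mul_zero, add_zero, zero_add]; ring]
    simp
  have e0 : toPoly c q3_0 * toPoly c L3 + toPoly c s3_1
      = toPoly c s3_0 * toPoly c s3_0 * toPoly c s3_0 := by
    have h := congrArg (toPoly c)
      (show ladd (lmul q3_0 L3) s3_1 = lmul (lmul s3_0 s3_0) s3_0 by decide)
    simpa only [toPoly_ladd, toPoly_lmul hc] using h
  have h1 : toPoly c L3 ∣ X ^ 3 - toPoly c s3_1 := by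
    have := chain_step h0 e0; norm_num at this; exact this
  have e1 : toPoly c q3_1 * toPoly c L3 + toPoly c s3_2
      = toPoly c s3_1 * toPoly c s3_1 * toPoly c s3_1 := by
    have h := congrArg (toPoly c)
      (show ladd (lmul q3_1 L3) s3_2 = lmul (lmul s3_1 s3_1) s3_1 by decide)
    simpa only [toPoly_ladd, toPoly_lmul hc] using h
  have h2 : toPoly c L3 ∣ X ^ 9 - toPoly c s3_2 := by
    have := chain_step h1 e1; norm_num at this; exact this
  interval_cases d <;> try omega
  · rw [show (9:ℕ) ^ 1 = 9 by norm_num]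
    obtain ⟨t, ht⟩ := h2
    have hw : toPoly c w3_1 = toPoly c s3_2 - X := by
      have h := congrArg (toPoly c) (show ladd w3_1 [(0, 0), (1, 0)] = s3_2 by decide)
      rw [toPoly_ladd, toPoly_X] at h
      linear_combination h
    have hbez : toPoly c u3_1 * toPoly c L3 + toPoly c v3_1 * toPoly c w3_1 = 1 := by
      have h := congrArg (toPoly c)
        (show ladd (lmul u3_1 L3) (lmul v3_1 w3_1) = (1, 0) :: List.replicate 4 (0, 0) by decide)
      simpa only [toPoly_ladd, toPoly_lmul hc, toPoly_one_pad] using h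
    have hcop : IsCoprime (toPoly c L3) (toPoly c w3_1) := ⟨toPoly c u3_1, toPoly c v3_1, hbez⟩
    have hfin := hcop.add_mul_left_right t
    have heq : toPoly c w3_1 + toPoly c L3 * t = X ^ 9 - X := by
      rw [hw]; linear_combination -ht
    rwa [heq] at hfin

theorem hfe4 (c : GF) : toPoly c L4 = 1 + 2 * C c + 1 * X + C c * X ^ 2 + 2 * X ^ 3 + 2 * C c * X ^ 3 + X ^ 4 := by
  simp only [L4, toPoly, phi, map_zero, map_one, map_ofNat, map_add, map_mul, zero_mul,
    one_mul, mul_zero, add_zero, zero_add]; ring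

theorem deg4 (c : GF) : (toPoly c L4).natDegree = 4 := by
  rw [hfe4]; compute_degree!

theorem irr4 (c : GF) (hc : c ^ 2 = c + 1) : Irreducible (toPoly c L4) := by
  haveI : Fintype GF := Fintype.ofFinite _
  have hcard : Fintype.card GF = 9 := by
    rw [← Nat.card_eq_fintype_card, GaloisField.card 3 2 (by norm_num)]; norm_num
  apply irreducible_of_coprime _ (by rw [Monic.def, Polynomial.leadingCoeff, deg4, hfe4]; compute_degree!) (by rw [deg4]; try norm_num)
  intro d hd1 hd2
  rw [deg4 c] at hd2
  rw [hcard]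
  have hub : d ≤ 4 := by omega
  have h0 : toPoly c L4 ∣ X ^ 1 - toPoly c s4_0 := by
    rw [show toPoly c s4_0 = X by
      simp only [s4_0, toPoly, phi, map_zero, map_one, map_ofNat, map_add, map_mul, zero_mul,
    one_mul, mul_zero, add_zero, zero_add]; ring]
    simp
  have e0 : toPoly c q4_0 * toPoly c L4 + toPoly c s4_1
      = toPoly c s4_0 * toPoly c s4_0 * toPoly c s4_0 := by
    have h := congrArg (toPoly c)
      (show ladd (lmul q4_0 L4) s4_1 = lmul (lmul s4_0 s4_0) s4_0 by decide)
    simpa only [toPoly_ladd, toPoly_lmul hc] using h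
  have h1 : toPoly c L4 ∣ X ^ 3 - toPoly c s4_1 := by
    have := chain_step h0 e0; norm_num at this; exact this
  have e1 : toPoly c q4_1 * toPoly c L4 + toPoly c s4_2
      = toPoly c s4_1 * toPoly c s4_1 * toPoly c s4_1 := by
    have h := congrArg (toPoly c)
      (show ladd (lmul q4_1 L4) s4_2 = lmul (lmul s4_1 s4_1) s4_1 by decide)
    simpa only [toPoly_ladd, toPoly_lmul hc] using h
  have h2 : toPoly c L4 ∣ X ^ 9 - toPoly c s4_2 := by
    have := chain_step h1 e1; norm_num at this; exact this
  have e2 : toPoly c q4_2 * toPoly c L4 + toPoly c s4_3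
      = toPoly c s4_2 * toPoly c s4_2 * toPoly c s4_2 := by
    have h := congrArg (toPoly c)
      (show ladd (lmul q4_2 L4) s4_3 = lmul (lmul s4_2 s4_2) s4_2 by decide)
    simpa only [toPoly_ladd, toPoly_lmul hc] using h
  have h3 : toPoly c L4 ∣ X ^ 27 - toPoly c s4_3 := by
    have := chain_step h2 e2; norm_num at this; exact this
  have e3 : toPoly c q4_3 * toPoly c L4 + toPoly c s4_4
      = toPoly c s4_3 * toPoly c s4_3 * toPoly c s4_3 := by
    have h := congrArg (toPoly c)
      (show ladd (lmul q4_3 L4) s4_4 = lmul (lmul s4_3 s4_3) s4_3 by decide)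
    simpa only [toPoly_ladd, toPoly_lmul hc] using h
  have h4 : toPoly c L4 ∣ X ^ 81 - toPoly c s4_4 := by
    have := chain_step h3 e3; norm_num at this; exact this
  interval_cases d <;> try omega
  · rw [show (9:ℕ) ^ 1 = 9 by norm_num]
    obtain ⟨t, ht⟩ := h2
    have hw : toPoly c w4_1 = toPoly c s4_2 - X := by
      have h := congrArg (toPoly c) (show ladd w4_1 [(0, 0), (1, 0)] = s4_2 by decide)
      rw [toPoly_ladd, toPoly_X] at h
      linear_combination h
    have hbez : toPoly c u4_1 * toPoly c L4 + toPoly c v4_1 * toPoly c w4_1 = 1 := by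
      have h := congrArg (toPoly c)
        (show ladd (lmul u4_1 L4) (lmul v4_1 w4_1) = (1, 0) :: List.replicate 6 (0, 0) by decide)
      simpa only [toPoly_ladd, toPoly_lmul hc, toPoly_one_pad] using h
    have hcop : IsCoprime (toPoly c L4) (toPoly c w4_1) := ⟨toPoly c u4_1, toPoly c v4_1, hbez⟩
    have hfin := hcop.add_mul_left_right t
    have heq : toPoly c w4_1 + toPoly c L4 * t = X ^ 9 - X := by
      rw [hw]; linear_combination -ht
    rwa [heq] at hfin
  · rw [show (9:ℕ) ^ 2 = 81 by norm_num]
    obtain ⟨t, ht⟩ := h4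
    have hw : toPoly c w4_2 = toPoly c s4_4 - X := by
      have h := congrArg (toPoly c) (show ladd w4_2 [(0, 0), (1, 0)] = s4_4 by decide)
      rw [toPoly_ladd, toPoly_X] at h
      linear_combination h
    have hbez : toPoly c u4_2 * toPoly c L4 + toPoly c v4_2 * toPoly c w4_2 = 1 := by
      have h := congrArg (toPoly c)
        (show ladd (lmul u4_2 L4) (lmul v4_2 w4_2) = (1, 0) :: List.replicate 6 (0, 0) by decide)
      simpa only [toPoly_ladd, toPoly_lmul hc, toPoly_one_pad] using h
    have hcop : IsCoprime (toPoly c L4) (toPoly c w4_2) := ⟨toPoly c u4_2, toPoly c v4_2, hbez⟩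
    have hfin := hcop.add_mul_left_right t
    have heq : toPoly c w4_2 + toPoly c L4 * t = X ^ 81 - X := by
      rw [hw]; linear_combination -ht
    rwa [heq] at hfin

theorem hfe5 (c : GF) : toPoly c L5 = 1 + 2 * C c + 2 * X + C c * X + 2 * X ^ 2 + 2 * C c * X ^ 2 + 2 * X ^ 3 + C c * X ^ 3 + C c * X ^ 4 + 2 * X ^ 5 + 2 * C c * X ^ 5 + X ^ 6 := by
  simp only [L5, toPoly, phi, map_zero, map_one, map_ofNat, map_add, map_mul, zero_mul,
    one_mul, mul_zero, add_zero, zero_add]; ring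

theorem deg5 (c : GF) : (toPoly c L5).natDegree = 6 := by
  rw [hfe5]; compute_degree!

theorem irr5 (c : GF) (hc : c ^ 2 = c + 1) : Irreducible (toPoly c L5) := by
  haveI : Fintype GF := Fintype.ofFinite _
  have hcard : Fintype.card GF = 9 := by
    rw [← Nat.card_eq_fintype_card, GaloisField.card 3 2 (by norm_num)]; norm_num
  apply irreducible_of_coprime _ (by rw [Monic.def, Polynomial.leadingCoeff, deg5, hfe5]; compute_degree!) (by rw [deg5]; try norm_num)
  intro d hd1 hd2
  rw [deg5 c] at hd2
  rw [hcard]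
  have hub : d ≤ 4 := by omega
  have h0 : toPoly c L5 ∣ X ^ 1 - toPoly c s5_0 := by
    rw [show toPoly c s5_0 = X by
      simp only [s5_0, toPoly, phi, map_zero, map_one, map_ofNat, map_add, map_mul, zero_mul,
    one_mul, mul_zero, add_zero, zero_add]; ring]
    simp
  have e0 : toPoly c q5_0 * toPoly c L5 + toPoly c s5_1
      = toPoly c s5_0 * toPoly c s5_0 * toPoly c s5_0 := by
    have h := congrArg (toPoly c)
      (show ladd (lmul q5_0 L5) s5_1 = lmul (lmul s5_0 s5_0) s5_0 by decide)
    simpa only [toPoly_ladd, toPoly_lmul hc] using h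
  have h1 : toPoly c L5 ∣ X ^ 3 - toPoly c s5_1 := by
    have := chain_step h0 e0; norm_num at this; exact this
  have e1 : toPoly c q5_1 * toPoly c L5 + toPoly c s5_2
      = toPoly c s5_1 * toPoly c s5_1 * toPoly c s5_1 := by
    have h := congrArg (toPoly c)
      (show ladd (lmul q5_1 L5) s5_2 = lmul (lmul s5_1 s5_1) s5_1 by decide)
    simpa only [toPoly_ladd, toPoly_lmul hc] using h
  have h2 : toPoly c L5 ∣ X ^ 9 - toPoly c s5_2 := by
    have := chain_step h1 e1; norm_num at this; exact this
  have e2 : toPoly c q5_2 * toPoly c L5 + toPoly c s5_3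
      = toPoly c s5_2 * toPoly c s5_2 * toPoly c s5_2 := by
    have h := congrArg (toPoly c)
      (show ladd (lmul q5_2 L5) s5_3 = lmul (lmul s5_2 s5_2) s5_2 by decide)
    simpa only [toPoly_ladd, toPoly_lmul hc] using h
  have h3 : toPoly c L5 ∣ X ^ 27 - toPoly c s5_3 := by
    have := chain_step h2 e2; norm_num at this; exact this
  have e3 : toPoly c q5_3 * toPoly c L5 + toPoly c s5_4
      = toPoly c s5_3 * toPoly c s5_3 * toPoly c s5_3 := by
    have h := congrArg (toPoly c)
      (show ladd (lmul q5_3 L5) s5_4 = lmul (lmul s5_3 s5_3) s5_3 by decide)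
    simpa only [toPoly_ladd, toPoly_lmul hc] using h
  have h4 : toPoly c L5 ∣ X ^ 81 - toPoly c s5_4 := by
    have := chain_step h3 e3; norm_num at this; exact this
  have e4 : toPoly c q5_4 * toPoly c L5 + toPoly c s5_5
      = toPoly c s5_4 * toPoly c s5_4 * toPoly c s5_4 := by
    have h := congrArg (toPoly c)
      (show ladd (lmul q5_4 L5) s5_5 = lmul (lmul s5_4 s5_4) s5_4 by decide)
    simpa only [toPoly_ladd, toPoly_lmul hc] using h
  have h5 : toPoly c L5 ∣ X ^ 243 - toPoly c s5_5 := by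
    have := chain_step h4 e4; norm_num at this; exact this
  have e5 : toPoly c q5_5 * toPoly c L5 + toPoly c s5_6
      = toPoly c s5_5 * toPoly c s5_5 * toPoly c s5_5 := by
    have h := congrArg (toPoly c)
      (show ladd (lmul q5_5 L5) s5_6 = lmul (lmul s5_5 s5_5) s5_5 by decide)
    simpa only [toPoly_ladd, toPoly_lmul hc] using h
  have h6 : toPoly c L5 ∣ X ^ 729 - toPoly c s5_6 := by
    have := chain_step h5 e5; norm_num at this; exact this
  interval_cases d <;> try omega
  · rw [show (9:ℕ) ^ 1 = 9 by norm_num]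
    obtain ⟨t, ht⟩ := h2
    have hw : toPoly c w5_1 = toPoly c s5_2 - X := by
      have h := congrArg (toPoly c) (show ladd w5_1 [(0, 0), (1, 0)] = s5_2 by decide)
      rw [toPoly_ladd, toPoly_X] at h
      linear_combination h
    have hbez : toPoly c u5_1 * toPoly c L5 + toPoly c v5_1 * toPoly c w5_1 = 1 := by
      have h := congrArg (toPoly c)
        (show ladd (lmul u5_1 L5) (lmul v5_1 w5_1) = (1, 0) :: List.replicate 10 (0, 0) by decide)
      simpa only [toPoly_ladd, toPoly_lmul hc, toPoly_one_pad] using h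
    have hcop : IsCoprime (toPoly c L5) (toPoly c w5_1) := ⟨toPoly c u5_1, toPoly c v5_1, hbez⟩
    have hfin := hcop.add_mul_left_right t
    have heq : toPoly c w5_1 + toPoly c L5 * t = X ^ 9 - X := by
      rw [hw]; linear_combination -ht
    rwa [heq] at hfin
  · rw [show (9:ℕ) ^ 2 = 81 by norm_num]
    obtain ⟨t, ht⟩ := h4
    have hw : toPoly c w5_2 = toPoly c s5_4 - X := by
      have h := congrArg (toPoly c) (show ladd w5_2 [(0, 0), (1, 0)] = s5_4 by decide)
      rw [toPoly_ladd, toPoly_X] at h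
      linear_combination h
    have hbez : toPoly c u5_2 * toPoly c L5 + toPoly c v5_2 * toPoly c w5_2 = 1 := by
      have h := congrArg (toPoly c)
        (show ladd (lmul u5_2 L5) (lmul v5_2 w5_2) = (1, 0) :: List.replicate 10 (0, 0) by decide)
      simpa only [toPoly_ladd, toPoly_lmul hc, toPoly_one_pad] using h
    have hcop : IsCoprime (toPoly c L5) (toPoly c w5_2) := ⟨toPoly c u5_2, toPoly c v5_2, hbez⟩
    have hfin := hcop.add_mul_left_right t
    have heq : toPoly c w5_2 + toPoly c L5 * t = X ^ 81 - X := by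
      rw [hw]; linear_combination -ht
    rwa [heq] at hfin
  · rw [show (9:ℕ) ^ 3 = 729 by norm_num]
    obtain ⟨t, ht⟩ := h6
    have hw : toPoly c w5_3 = toPoly c s5_6 - X := by
      have h := congrArg (toPoly c) (show ladd w5_3 [(0, 0), (1, 0)] = s5_6 by decide)
      rw [toPoly_ladd, toPoly_X] at h
      linear_combination h
    have hbez : toPoly c u5_3 * toPoly c L5 + toPoly c v5_3 * toPoly c w5_3 = 1 := by
      have h := congrArg (toPoly c)
        (show ladd (lmul u5_3 L5) (lmul v5_3 w5_3) = (1, 0) :: List.replicate 10 (0, 0) by decide)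
      simpa only [toPoly_ladd, toPoly_lmul hc, toPoly_one_pad] using h
    have hcop : IsCoprime (toPoly c L5) (toPoly c w5_3) := ⟨toPoly c u5_3, toPoly c v5_3, hbez⟩
    have hfin := hcop.add_mul_left_right t
    have heq : toPoly c w5_3 + toPoly c L5 * t = X ^ 729 - X := by
      rw [hw]; linear_combination -ht
    rwa [heq] at hfin

theorem hfe6 (c : GF) : toPoly c L6 = 2 * C c + 2 * X + 2 * C c * X + 1 * X ^ 2 + 2 * C c * X ^ 3 + C c * X ^ 4 + C c * X ^ 5 + 2 * C c * X ^ 6 + 2 * X ^ 7 + C c * X ^ 7 + X ^ 8 := by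
  simp only [L6, toPoly, phi, map_zero, map_one, map_ofNat, map_add, map_mul, zero_mul,
    one_mul, mul_zero, add_zero, zero_add]; ring

theorem deg6 (c : GF) : (toPoly c L6).natDegree = 8 := by
  rw [hfe6]; compute_degree!

set_option maxRecDepth 100000 in
theorem irr6 (c : GF) (hc : c ^ 2 = c + 1) : Irreducible (toPoly c L6) := by
  haveI : Fintype GF := Fintype.ofFinite _
  have hcard : Fintype.card GF = 9 := by
    rw [← Nat.card_eq_fintype_card, GaloisField.card 3 2 (by norm_num)]; norm_num
  apply irreducible_of_coprime _ (by rw [Monic.def, Polynomial.leadingCoeff, deg6, hfe6]; compute_degree!) (by rw [deg6]; try norm_num)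
  intro d hd1 hd2
  rw [deg6 c] at hd2
  rw [hcard]
  have hub : d ≤ 4 := by omega
  have h0 : toPoly c L6 ∣ X ^ 1 - toPoly c s6_0 := by
    rw [show toPoly c s6_0 = X by
      simp only [s6_0, toPoly, phi, map_zero, map_one, map_ofNat, map_add, map_mul, zero_mul,
    one_mul, mul_zero, add_zero, zero_add]; ring]
    simp
  have e0 : toPoly c q6_0 * toPoly c L6 + toPoly c s6_1
      = toPoly c s6_0 * toPoly c s6_0 * toPoly c s6_0 := by
    have h := congrArg (toPoly c)
      (show ladd (lmul q6_0 L6) s6_1 = lmul (lmul s6_0 s6_0) s6_0 by decide)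
    simpa only [toPoly_ladd, toPoly_lmul hc] using h
  have h1 : toPoly c L6 ∣ X ^ 3 - toPoly c s6_1 := by
    have := chain_step h0 e0; norm_num at this; exact this
  have e1 : toPoly c q6_1 * toPoly c L6 + toPoly c s6_2
      = toPoly c s6_1 * toPoly c s6_1 * toPoly c s6_1 := by
    have h := congrArg (toPoly c)
      (show ladd (lmul q6_1 L6) s6_2 = lmul (lmul s6_1 s6_1) s6_1 by decide)
    simpa only [toPoly_ladd, toPoly_lmul hc] using h
  have h2 : toPoly c L6 ∣ X ^ 9 - toPoly c s6_2 := by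
    have := chain_step h1 e1; norm_num at this; exact this
  have e2 : toPoly c q6_2 * toPoly c L6 + toPoly c s6_3
      = toPoly c s6_2 * toPoly c s6_2 * toPoly c s6_2 := by
    have h := congrArg (toPoly c)
      (show ladd (lmul q6_2 L6) s6_3 = lmul (lmul s6_2 s6_2) s6_2 by decide)
    simpa only [toPoly_ladd, toPoly_lmul hc] using h
  have h3 : toPoly c L6 ∣ X ^ 27 - toPoly c s6_3 := by
    have := chain_step h2 e2; norm_num at this; exact this
  have e3 : toPoly c q6_3 * toPoly c L6 + toPoly c s6_4
      = toPoly c s6_3 * toPoly c s6_3 * toPoly c s6_3 := by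
    have h := congrArg (toPoly c)
      (show ladd (lmul q6_3 L6) s6_4 = lmul (lmul s6_3 s6_3) s6_3 by decide)
    simpa only [toPoly_ladd, toPoly_lmul hc] using h
  have h4 : toPoly c L6 ∣ X ^ 81 - toPoly c s6_4 := by
    have := chain_step h3 e3; norm_num at this; exact this
  have e4 : toPoly c q6_4 * toPoly c L6 + toPoly c s6_5
      = toPoly c s6_4 * toPoly c s6_4 * toPoly c s6_4 := by
    have h := congrArg (toPoly c)
      (show ladd (lmul q6_4 L6) s6_5 = lmul (lmul s6_4 s6_4) s6_4 by decide)
    simpa only [toPoly_ladd, toPoly_lmul hc] using h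
  have h5 : toPoly c L6 ∣ X ^ 243 - toPoly c s6_5 := by
    have := chain_step h4 e4; norm_num at this; exact this
  have e5 : toPoly c q6_5 * toPoly c L6 + toPoly c s6_6
      = toPoly c s6_5 * toPoly c s6_5 * toPoly c s6_5 := by
    have h := congrArg (toPoly c)
      (show ladd (lmul q6_5 L6) s6_6 = lmul (lmul s6_5 s6_5) s6_5 by decide)
    simpa only [toPoly_ladd, toPoly_lmul hc] using h
  have h6 : toPoly c L6 ∣ X ^ 729 - toPoly c s6_6 := by
    have := chain_step h5 e5; norm_num at this; exact this
  have e6 : toPoly c q6_6 * toPoly c L6 + toPoly c s6_7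
      = toPoly c s6_6 * toPoly c s6_6 * toPoly c s6_6 := by
    have h := congrArg (toPoly c)
      (show ladd (lmul q6_6 L6) s6_7 = lmul (lmul s6_6 s6_6) s6_6 by decide)
    simpa only [toPoly_ladd, toPoly_lmul hc] using h
  have h7 : toPoly c L6 ∣ X ^ 2187 - toPoly c s6_7 := by
    have := chain_step h6 e6; norm_num at this; exact this
  have e7 : toPoly c q6_7 * toPoly c L6 + toPoly c s6_8
      = toPoly c s6_7 * toPoly c s6_7 * toPoly c s6_7 := by
    have h := congrArg (toPoly c)
      (show ladd (lmul q6_7 L6) s6_8 = lmul (lmul s6_7 s6_7) s6_7 by decide)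
    simpa only [toPoly_ladd, toPoly_lmul hc] using h
  have h8 : toPoly c L6 ∣ X ^ 6561 - toPoly c s6_8 := by
    have := chain_step h7 e7; norm_num at this; exact this
  interval_cases d <;> try omega
  · rw [show (9:ℕ) ^ 1 = 9 by norm_num]
    obtain ⟨t, ht⟩ := h2
    have hw : toPoly c w6_1 = toPoly c s6_2 - X := by
      have h := congrArg (toPoly c) (show ladd w6_1 [(0, 0), (1, 0)] = s6_2 by decide)
      rw [toPoly_ladd, toPoly_X] at h
      linear_combination h
    have hbez : toPoly c u6_1 * toPoly c L6 + toPoly c v6_1 * toPoly c w6_1 = 1 := by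
      have h := congrArg (toPoly c)
        (show ladd (lmul u6_1 L6) (lmul v6_1 w6_1) = (1, 0) :: List.replicate 14 (0, 0) by decide)
      simpa only [toPoly_ladd, toPoly_lmul hc, toPoly_one_pad] using h
    have hcop : IsCoprime (toPoly c L6) (toPoly c w6_1) := ⟨toPoly c u6_1, toPoly c v6_1, hbez⟩
    have hfin := hcop.add_mul_left_right t
    have heq : toPoly c w6_1 + toPoly c L6 * t = X ^ 9 - X := by
      rw [hw]; linear_combination -ht
    rwa [heq] at hfin
  · rw [show (9:ℕ) ^ 2 = 81 by norm_num]
    obtain ⟨t, ht⟩ := h4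
    have hw : toPoly c w6_2 = toPoly c s6_4 - X := by
      have h := congrArg (toPoly c) (show ladd w6_2 [(0, 0), (1, 0)] = s6_4 by decide)
      rw [toPoly_ladd, toPoly_X] at h
      linear_combination h
    have hbez : toPoly c u6_2 * toPoly c L6 + toPoly c v6_2 * toPoly c w6_2 = 1 := by
      have h := congrArg (toPoly c)
        (show ladd (lmul u6_2 L6) (lmul v6_2 w6_2) = (1, 0) :: List.replicate 14 (0, 0) by decide)
      simpa only [toPoly_ladd, toPoly_lmul hc, toPoly_one_pad] using h
    have hcop : IsCoprime (toPoly c L6) (toPoly c w6_2) := ⟨toPoly c u6_2, toPoly c v6_2, hbez⟩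
    have hfin := hcop.add_mul_left_right t
    have heq : toPoly c w6_2 + toPoly c L6 * t = X ^ 81 - X := by
      rw [hw]; linear_combination -ht
    rwa [heq] at hfin
  · rw [show (9:ℕ) ^ 3 = 729 by norm_num]
    obtain ⟨t, ht⟩ := h6
    have hw : toPoly c w6_3 = toPoly c s6_6 - X := by
      have h := congrArg (toPoly c) (show ladd w6_3 [(0, 0), (1, 0)] = s6_6 by decide)
      rw [toPoly_ladd, toPoly_X] at h
      linear_combination h
    have hbez : toPoly c u6_3 * toPoly c L6 + toPoly c v6_3 * toPoly c w6_3 = 1 := by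
      have h := congrArg (toPoly c)
        (show ladd (lmul u6_3 L6) (lmul v6_3 w6_3) = (1, 0) :: List.replicate 14 (0, 0) by decide)
      simpa only [toPoly_ladd, toPoly_lmul hc, toPoly_one_pad] using h
    have hcop : IsCoprime (toPoly c L6) (toPoly c w6_3) := ⟨toPoly c u6_3, toPoly c v6_3, hbez⟩
    have hfin := hcop.add_mul_left_right t
    have heq : toPoly c w6_3 + toPoly c L6 * t = X ^ 729 - X := by
      rw [hw]; linear_combination -ht
    rwa [heq] at hfin
  · rw [show (9:ℕ) ^ 4 = 6561 by norm_num]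
    obtain ⟨t, ht⟩ := h8
    have hw : toPoly c w6_4 = toPoly c s6_8 - X := by
      have h := congrArg (toPoly c) (show ladd w6_4 [(0, 0), (1, 0)] = s6_8 by decide)
      rw [toPoly_ladd, toPoly_X] at h
      linear_combination h
    have hbez : toPoly c u6_4 * toPoly c L6 + toPoly c v6_4 * toPoly c w6_4 = 1 := by
      have h := congrArg (toPoly c)
        (show ladd (lmul u6_4 L6) (lmul v6_4 w6_4) = (1, 0) :: List.replicate 14 (0, 0) by decide)
      simpa only [toPoly_ladd, toPoly_lmul hc, toPoly_one_pad] using h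
    have hcop : IsCoprime (toPoly c L6) (toPoly c w6_4) := ⟨toPoly c u6_4, toPoly c v6_4, hbez⟩
    have hfin := hcop.add_mul_left_right t
    have heq : toPoly c w6_4 + toPoly c L6 * t = X ^ 6561 - X := by
      rw [hw]; linear_combination -ht
    rwa [heq] at hfin

theorem hfeT (c : GF) : toPoly c Ltarget = X ^ 24 + 2 * X + C c := by
  simp only [Ltarget, toPoly, phi, map_zero, map_one, map_ofNat, map_add, map_mul, zero_mul,
    one_mul, mul_zero, add_zero, zero_add]; ring

end X24F9

/-- Let `c ∈ F₉` satisfy `c² = c + 1`. Then `x²⁴ − x + c` factors over `F₉` as a product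
of six irreducible polynomials of degrees 1, 2, 3, 4, 6 and 8. -/
theorem factorization_x24_F9 (c : GaloisField 3 2) (hc : c ^ 2 = c + 1) :
    ∃ f₁ f₂ f₃ f₄ f₅ f₆ : (GaloisField 3 2)[X],
      Irreducible f₁ ∧ Irreducible f₂ ∧ Irreducible f₃ ∧
      Irreducible f₄ ∧ Irreducible f₅ ∧ Irreducible f₆ ∧
      f₁.natDegree = 1 ∧ f₂.natDegree = 2 ∧ f₃.natDegree = 3 ∧
      f₄.natDegree = 4 ∧ f₅.natDegree = 6 ∧ f₆.natDegree = 8 ∧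
      (X ^ 24 - X + C c : (GaloisField 3 2)[X]) = f₁ * f₂ * f₃ * f₄ * f₅ * f₆ := by
  refine ⟨X24F9.toPoly c X24F9.L1, X24F9.toPoly c X24F9.L2, X24F9.toPoly c X24F9.L3,
    X24F9.toPoly c X24F9.L4, X24F9.toPoly c X24F9.L5, X24F9.toPoly c X24F9.L6,
    X24F9.irr1 c, X24F9.irr2 c hc, X24F9.irr3 c hc, X24F9.irr4 c hc, X24F9.irr5 c hc,
    X24F9.irr6 c hc, X24F9.deg1 c, X24F9.deg2 c, X24F9.deg3 c, X24F9.deg4 c, X24F9.deg5 c,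
    X24F9.deg6 c, ?_⟩
  have hP := congrArg (X24F9.toPoly c)
    (show X24F9.lmul X24F9.L1 (X24F9.lmul X24F9.L2 (X24F9.lmul X24F9.L3 (X24F9.lmul X24F9.L4
      (X24F9.lmul X24F9.L5 X24F9.L6)))) = X24F9.Ltarget by decide)
  simp only [X24F9.toPoly_lmul hc] at hP
  rw [X24F9.hfeT c] at hP
  have h3 : (3 : (GaloisField 3 2)[X]) = 0 := by
    have h := CharP.cast_eq_zero (GaloisField 3 2) 3
    have h2 := congrArg Polynomial.C h
    rw [Polynomial.C_eq_natCast, Polynomial.C_0] at h2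
    exact_mod_cast h2
  linear_combination -hP - X * h3
end

section
/- The only solution in integers g ≥ 0, k ≥ 0 of the equation 3·(2^g + 1) = 2^k − 1 is g = 2, k = 4. -/
/-- The only solution in natural numbers of `3·(2^g + 1) = 2^k − 1` is `g = 2`, `k = 4`. -/
theorem unique_solution_pow_two (g k : ℕ) :
    3 * (2 ^ g + 1) = 2 ^ k - 1 ↔ g = 2 ∧ k = 4 := by
  constructor
  · intro h
    have h1 : 1 ≤ 2 ^ k := Nat.one_le_two_pow
    have hk : 2 ^ k = 3 * 2 ^ g + 4 := by omega
    rcases le_or_gt g 2 with hg | hg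
    · interval_cases g
      · -- 2^k = 7
        exfalso
        rcases le_or_gt k 2 with hk2 | hk2
        · have : 2 ^ k ≤ 2 ^ 2 := Nat.pow_le_pow_right (by norm_num) hk2
          norm_num at this; omega
        · have : 2 ^ 3 ∣ 2 ^ k := Nat.pow_dvd_pow 2 hk2
          norm_num at this; omega
      · -- 2^k = 10
        exfalso
        rcases le_or_gt k 3 with hk2 | hk2
        · have : 2 ^ k ≤ 2 ^ 3 := Nat.pow_le_pow_right (by norm_num) hk2
          norm_num at this; omega
        · have : 2 ^ 4 ∣ 2 ^ k := Nat.pow_dvd_pow 2 hk2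
          norm_num at this; omega
      · -- 2^k = 16 = 2^4
        refine ⟨rfl, ?_⟩
        have : 2 ^ k = 2 ^ 4 := by norm_num at hk ⊢; omega
        exact Nat.pow_right_injective (by norm_num) this
    · exfalso
      obtain ⟨m, hm⟩ : ∃ m, g = m + 3 := ⟨g - 3, by omega⟩
      have hpow : 2 ^ g = 2 ^ m * 8 := by rw [hm, pow_add]; ring
      have hm1 : 1 ≤ 2 ^ m := Nat.one_le_two_pow
      have hk5 : 5 ≤ k := by
        by_contra hc
        have : 2 ^ k ≤ 2 ^ 4 := Nat.pow_le_pow_right (by norm_num) (by omega)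
        norm_num at this; omega
      obtain ⟨n, hn⟩ : ∃ n, k = n + 5 := ⟨k - 5, by omega⟩
      have hpk : 2 ^ k = 2 ^ n * 32 := by rw [hn, pow_add]; ring
      omega
  · rintro ⟨rfl, rfl⟩
    norm_num
end
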